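/- Let (φ_k)_{k≥1} be a real-valued martingale difference sequence adapted to a filtration (F_k)_{k≥1} (i.e., φ_k is F_k-measurable, integrable, and E[φ_{k+1} | F_k] = 0), and let (d_k)_{k≥1} be nonnegative real constants with |φ_k| ≤ d_k almost surely for every k. Then for every 0 < δ ≤ 1/2, with probability at least 1 − 4δ, for every positive integer k, |∑_{i=1}^k φ_i| ≤ 2·√( (∑_{i=1}^k d_i²) · log(k/δ) ). -/

import Mathlib

open MeasureTheory ProbabilityTheory

/-- Time-uniform Azuma–Hoeffding inequality: if `(φ k)_{k ≥ 1}` is a martingale difference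
sequence adapted to the filtration `(F k)` with `|φ k| ≤ d k` a.s., then for `0 < δ ≤ 1/2`,
with probability at least `1 - 4δ`, for every positive integer `k`,
`|∑_{i=1}^k φ i| ≤ 2 √((∑_{i=1}^k d i ^ 2) log(k/δ))`. -/
lemma aux_cond_mgf {Ω : Type*} {m0 : MeasurableSpace Ω} {μ : Measure Ω}
    [IsProbabilityMeasure μ] {m : MeasurableSpace Ω} (hm : m ≤ m0)
    {X : Ω → ℝ} {c t : ℝ}
    (hX : Integrable X μ) (hmean : μ[X | m] =ᵐ[μ] 0)
    (hc : ∀ᵐ ω ∂μ, |X ω| ≤ c) :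
    μ[fun ω => Real.exp (t * X ω) | m] ≤ᵐ[μ] fun _ => Real.exp (t ^ 2 * c ^ 2 / 2) := by
  have hc0 : 0 ≤ c := by
    obtain ⟨ω, hω⟩ := hc.exists
    exact (abs_nonneg _).trans hω
  -- integrability of exp (t * X)
  have hmeasX : @AEStronglyMeasurable Ω ℝ _ m0 m0 (fun ω => Real.exp (t * X ω)) μ :=
    Real.continuous_exp.comp_aestronglyMeasurable (hX.1.const_mul t)
  have hexp_int : Integrable (fun ω => Real.exp (t * X ω)) μ := by
    refine Integrable.mono' (integrable_const (Real.exp (|t| * c))) hmeasX ?_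
    filter_upwards [hc] with ω h
    rw [Real.norm_eq_abs, abs_of_pos (Real.exp_pos _)]
    refine Real.exp_le_exp.2 ?_
    calc t * X ω ≤ |t * X ω| := le_abs_self _
      _ = |t| * |X ω| := abs_mul _ _
      _ ≤ |t| * c := mul_le_mul_of_nonneg_left h (abs_nonneg t)
  rcases eq_or_lt_of_le hc0 with h0 | hcpos
  · -- c = 0 : X = 0 a.e.
    have hX0 : (fun ω => Real.exp (t * X ω)) =ᵐ[μ] fun _ => (1 : ℝ) := by
      filter_upwards [hc] with ω h
      rw [← h0] at h
      have : X ω = 0 := abs_nonpos_iff.mp h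
      simp [this]
    calc μ[fun ω => Real.exp (t * X ω) | m] =ᵐ[μ] μ[(fun _ => (1:ℝ)) | m] :=
          condExp_congr_ae hX0
      _ = fun _ => (1:ℝ) := condExp_const hm 1
      _ ≤ᵐ[μ] fun _ => Real.exp (t ^ 2 * c ^ 2 / 2) := by
          refine Filter.Eventually.of_forall fun ω => ?_
          exact Real.one_le_exp (by positivity)
  · -- c > 0
    set y := t * c with hy
    have hpt : (fun ω => Real.exp (t * X ω)) ≤ᵐ[μ]
        fun ω => Real.cosh y + (Real.sinh y / c) * X ω := by
      filter_upwards [hc] with ω h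
      obtain ⟨h1, h2⟩ := abs_le.mp h
      have ha : 0 ≤ (c + X ω) / (2 * c) := div_nonneg (by linarith) (by linarith)
      have hb : 0 ≤ (c - X ω) / (2 * c) := by
        exact div_nonneg (by linarith) (by linarith)
      have hab : (c + X ω) / (2 * c) + (c - X ω) / (2 * c) = 1 := by
        field_simp
        ring
      have key := convexOn_exp.2 (Set.mem_univ y) (Set.mem_univ (-y)) ha hb hab
      simp only [smul_eq_mul] at key
      have harg : (c + X ω) / (2 * c) * y + (c - X ω) / (2 * c) * (-y) = t * X ω := by
        field_simp
        ring
      rw [harg] at key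
      refine key.trans (le_of_eq ?_)
      rw [Real.cosh_eq, Real.sinh_eq]
      field_simp
      ring
    have hg_int : Integrable (fun ω => Real.cosh y + (Real.sinh y / c) * X ω) μ :=
      (integrable_const _).add (hX.const_mul _)
    have h1 := condExp_mono (m := m) hexp_int hg_int hpt
    have h2 : μ[(fun ω => Real.cosh y + (Real.sinh y / c) * X ω) | m] =ᵐ[μ]
        fun _ => Real.cosh y := by
      have hadd := condExp_add (μ := μ) (m := m) (integrable_const (Real.cosh y))
        (hX.const_mul (Real.sinh y / c))
      have hsmul : μ[(fun ω => (Real.sinh y / c) * X ω) | m] =ᵐ[μ]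
          fun ω => (Real.sinh y / c) * (μ[X | m]) ω := by
        exact condExp_smul (μ := μ) (m := m) (Real.sinh y / c) X
      calc μ[(fun ω => Real.cosh y + (Real.sinh y / c) * X ω) | m]
          =ᵐ[μ] μ[(fun _ => Real.cosh y) | m] + μ[(fun ω => (Real.sinh y / c) * X ω) | m] := hadd
        _ =ᵐ[μ] fun _ => Real.cosh y := by
            rw [condExp_const hm]
            filter_upwards [hsmul, hmean] with ω e1 e2
            simp only [Pi.add_apply, e1, e2]
            simp [e2]
    filter_upwards [h1, h2] with ω e1 e2
    calc (μ[fun ω => Real.exp (t * X ω) | m]) ω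
        ≤ (μ[(fun ω => Real.cosh y + (Real.sinh y / c) * X ω) | m]) ω := e1
      _ = Real.cosh y := e2
      _ ≤ Real.exp (y ^ 2 / 2) := Real.cosh_le_exp_half_sq y
      _ = Real.exp (t ^ 2 * c ^ 2 / 2) := by rw [hy]; ring_nf

section AzumaAux
set_option linter.unusedSectionVars false
variable {Ω : Type*} {m0 : MeasurableSpace Ω} {μ : Measure Ω} [IsProbabilityMeasure μ]
  {F : Filtration ℕ m0} {φ : ℕ → Ω → ℝ} {d : ℕ → ℝ}

/-- a.e., all increments `i ∈ Icc a k` are bounded by `d i`. -/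
lemma aux_ae_bound (hbound : ∀ k, 1 ≤ k → ∀ᵐ ω ∂μ, |φ k ω| ≤ d k) (a k : ℕ) (ha : 1 ≤ a) :
    ∀ᵐ ω ∂μ, ∀ i ∈ Finset.Icc a k, |φ i ω| ≤ d i := by
  refine (ae_ball_iff (Finset.Icc a k).countable_toSet).mpr fun i hi =>
    hbound i (le_trans ha (Finset.mem_Icc.mp hi).1)

lemma aux_sum_sm (hadapted : ∀ k, 1 ≤ k → StronglyMeasurable[F k] (φ k)) {k : ℕ} :
    StronglyMeasurable[F k] (fun ω => ∑ i ∈ Finset.Icc 2 k, φ i ω) := by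
  refine Finset.stronglyMeasurable_fun_sum _ fun i hi => ?_
  obtain ⟨h1, h2⟩ := Finset.mem_Icc.mp hi
  exact (hadapted i (le_trans (by norm_num) h1)).mono (F.mono h2)

lemma aux_exp_int (hadapted : ∀ k, 1 ≤ k → StronglyMeasurable[F k] (φ k))
    (hbound : ∀ k, 1 ≤ k → ∀ᵐ ω ∂μ, |φ k ω| ≤ d k) (k : ℕ) (t : ℝ) :
    Integrable (fun ω => Real.exp (t * ∑ i ∈ Finset.Icc 2 k, φ i ω)) μ := by
  have hsm : StronglyMeasurable (fun ω => Real.exp (t * ∑ i ∈ Finset.Icc 2 k, φ i ω)) :=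
    Real.continuous_exp.comp_stronglyMeasurable
      (((aux_sum_sm hadapted).mono (F.le k)).const_mul t)
  refine Integrable.mono' (integrable_const (Real.exp (|t| * ∑ i ∈ Finset.Icc 2 k, d i)))
    hsm.aestronglyMeasurable ?_
  filter_upwards [aux_ae_bound hbound 2 k (by norm_num)] with ω h
  rw [Real.norm_eq_abs, abs_of_pos (Real.exp_pos _)]
  refine Real.exp_le_exp.2 ?_
  calc t * ∑ i ∈ Finset.Icc 2 k, φ i ω ≤ |t * ∑ i ∈ Finset.Icc 2 k, φ i ω| := le_abs_self _
    _ = |t| * |∑ i ∈ Finset.Icc 2 k, φ i ω| := abs_mul _ _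
    _ ≤ |t| * ∑ i ∈ Finset.Icc 2 k, d i := by
        refine mul_le_mul_of_nonneg_left ?_ (abs_nonneg t)
        exact (Finset.abs_sum_le_sum_abs _ _).trans (Finset.sum_le_sum h)

lemma aux_mgf_le (hadapted : ∀ k, 1 ≤ k → StronglyMeasurable[F k] (φ k))
    (hint : ∀ k, 1 ≤ k → Integrable (φ k) μ)
    (hmds : ∀ k, 1 ≤ k → μ[φ (k + 1) | F k] =ᵐ[μ] 0)
    (hbound : ∀ k, 1 ≤ k → ∀ᵐ ω ∂μ, |φ k ω| ≤ d k) :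
    ∀ k, 1 ≤ k → ∀ t : ℝ,
      ∫ ω, Real.exp (t * ∑ i ∈ Finset.Icc 2 k, φ i ω) ∂μ ≤
        Real.exp (t ^ 2 * (∑ i ∈ Finset.Icc 2 k, d i ^ 2) / 2) := by
  intro k hk
  induction k, hk using Nat.le_induction with
  | base =>
    intro t
    rw [Finset.Icc_eq_empty (by norm_num : ¬ (2:ℕ) ≤ 1)]
    simp
  | succ k hk IH =>
    intro t
    have hsplit : ∀ (g : ℕ → Ω → ℝ) (ω : Ω), ∑ i ∈ Finset.Icc 2 (k+1), g i ω =
        (∑ i ∈ Finset.Icc 2 k, g i ω) + g (k+1) ω := fun g ω =>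
      Finset.sum_Icc_succ_top (by omega) _
    set T : Ω → ℝ := fun ω => ∑ i ∈ Finset.Icc 2 k, φ i ω with hT
    set f : Ω → ℝ := fun ω => Real.exp (t * T ω) with hf
    set g : Ω → ℝ := fun ω => Real.exp (t * φ (k+1) ω) with hg
    have hfsm : StronglyMeasurable[F k] f :=
      Real.continuous_exp.comp_stronglyMeasurable ((aux_sum_sm hadapted).const_mul t)
    have hf_int : Integrable f μ := aux_exp_int hadapted hbound k t
    have hg_int : Integrable g μ := by
      have hsm : StronglyMeasurable g :=
        Real.continuous_exp.comp_stronglyMeasurable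
          (((hadapted (k+1) (by omega)).mono (F.le (k+1))).const_mul t)
      refine Integrable.mono' (integrable_const (Real.exp (|t| * d (k+1))))
        hsm.aestronglyMeasurable ?_
      filter_upwards [hbound (k+1) (by omega)] with ω h
      rw [Real.norm_eq_abs, abs_of_pos (Real.exp_pos _)]
      refine Real.exp_le_exp.2 ?_
      calc t * φ (k+1) ω ≤ |t * φ (k+1) ω| := le_abs_self _
        _ = |t| * |φ (k+1) ω| := abs_mul _ _
        _ ≤ |t| * d (k+1) := mul_le_mul_of_nonneg_left h (abs_nonneg t)
    have hfg_int : Integrable (f * g) μ := by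
      have hsm : StronglyMeasurable (f * g) :=
        (hfsm.mono (F.le k)).mul (Real.continuous_exp.comp_stronglyMeasurable
          (((hadapted (k+1) (by omega)).mono (F.le (k+1))).const_mul t))
      refine Integrable.mono' (integrable_const
        (Real.exp (|t| * ∑ i ∈ Finset.Icc 2 k, d i) * Real.exp (|t| * d (k+1))))
        hsm.aestronglyMeasurable ?_
      filter_upwards [aux_ae_bound hbound 2 k (by norm_num), hbound (k+1) (by omega)]
        with ω h h1
      rw [Pi.mul_apply, Real.norm_eq_abs, abs_of_pos (by positivity)]
      refine mul_le_mul ?_ ?_ (Real.exp_pos _).le (Real.exp_pos _).le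
      · refine Real.exp_le_exp.2 ?_
        calc t * T ω ≤ |t * T ω| := le_abs_self _
          _ = |t| * |T ω| := abs_mul _ _
          _ ≤ |t| * ∑ i ∈ Finset.Icc 2 k, d i := by
              refine mul_le_mul_of_nonneg_left ?_ (abs_nonneg t)
              exact (Finset.abs_sum_le_sum_abs _ _).trans (Finset.sum_le_sum h)
      · refine Real.exp_le_exp.2 ?_
        calc t * φ (k+1) ω ≤ |t * φ (k+1) ω| := le_abs_self _
          _ = |t| * |φ (k+1) ω| := abs_mul _ _
          _ ≤ |t| * d (k+1) := mul_le_mul_of_nonneg_left h1 (abs_nonneg t)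
    have hcond : μ[g | F k] ≤ᵐ[μ] fun _ => Real.exp (t ^ 2 * d (k+1) ^ 2 / 2) :=
      aux_cond_mgf (F.le k) (hint (k+1) (by omega)) (hmds k hk) (hbound (k+1) (by omega))
    have hpull : μ[f * g | F k] =ᵐ[μ] f * μ[g | F k] :=
      condExp_mul_of_stronglyMeasurable_left hfsm hfg_int hg_int
    have step1 : ∫ ω, Real.exp (t * ∑ i ∈ Finset.Icc 2 (k+1), φ i ω) ∂μ
        = ∫ ω, (f * g) ω ∂μ := by
      refine integral_congr_ae (Filter.Eventually.of_forall fun ω => ?_)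
      show Real.exp (t * ∑ i ∈ Finset.Icc 2 (k+1), φ i ω) = f ω * g ω
      rw [hsplit φ ω]
      simp only [hf, hg, hT]
      rw [mul_add, Real.exp_add]
    have step2 : ∫ ω, (f * g) ω ∂μ = ∫ ω, (f * μ[g | F k]) ω ∂μ := by
      calc ∫ ω, (f * g) ω ∂μ = ∫ ω, (μ[f * g | F k]) ω ∂μ := (integral_condExp (F.le k)).symm
        _ = ∫ ω, (f * μ[g | F k]) ω ∂μ := integral_congr_ae hpull
    have step3 : ∫ ω, (f * μ[g | F k]) ω ∂μ ≤
        ∫ ω, f ω * Real.exp (t ^ 2 * d (k+1) ^ 2 / 2) ∂μ := by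
      refine integral_mono_ae (integrable_condExp.congr hpull) (hf_int.mul_const _) ?_
      filter_upwards [hcond] with ω h
      exact mul_le_mul_of_nonneg_left h (Real.exp_pos _).le
    have step4 : ∫ ω, f ω * Real.exp (t ^ 2 * d (k+1) ^ 2 / 2) ∂μ ≤
        Real.exp (t ^ 2 * (∑ i ∈ Finset.Icc 2 k, d i ^ 2) / 2) *
          Real.exp (t ^ 2 * d (k+1) ^ 2 / 2) := by
      rw [integral_mul_const]
      exact mul_le_mul_of_nonneg_right (IH t) (Real.exp_pos _).le
    calc ∫ ω, Real.exp (t * ∑ i ∈ Finset.Icc 2 (k+1), φ i ω) ∂μ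
        = ∫ ω, (f * μ[g | F k]) ω ∂μ := by rw [step1, step2]
      _ ≤ Real.exp (t ^ 2 * (∑ i ∈ Finset.Icc 2 k, d i ^ 2) / 2) *
          Real.exp (t ^ 2 * d (k+1) ^ 2 / 2) := le_trans step3 step4
      _ = Real.exp (t ^ 2 * (∑ i ∈ Finset.Icc 2 (k+1), d i ^ 2) / 2) := by
          rw [← Real.exp_add, Finset.sum_Icc_succ_top (by omega : (2:ℕ) ≤ k + 1)]
          congr 1
          ring

lemma aux_tail (hadapted : ∀ k, 1 ≤ k → StronglyMeasurable[F k] (φ k))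
    (hint : ∀ k, 1 ≤ k → Integrable (φ k) μ)
    (hmds : ∀ k, 1 ≤ k → μ[φ (k + 1) | F k] =ᵐ[μ] 0)
    (hd : ∀ k, 1 ≤ k → 0 ≤ d k)
    (hbound : ∀ k, 1 ≤ k → ∀ᵐ ω ∂μ, |φ k ω| ≤ d k)
    {δ : ℝ} (hδ0 : 0 < δ) (hδ1 : δ ≤ 1 / 2) (k : ℕ) (hk : 1 ≤ k) :
    μ {ω | 2 * Real.sqrt ((∑ i ∈ Finset.Icc 1 k, d i ^ 2) * Real.log (k / δ)) <
        |∑ i ∈ Finset.Icc 1 k, φ i ω|} ≤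
      ENNReal.ofReal (2 * Real.exp (1/2) * (δ / k) ^ 2) := by
  -- notation
  set a : ℝ := d 1 ^ 2 with ha_def
  set b : ℝ := ∑ i ∈ Finset.Icc 2 k, d i ^ 2 with hb_def
  set L : ℝ := Real.log (k / δ) with hL_def
  set V : ℝ := ∑ i ∈ Finset.Icc 1 k, d i ^ 2 with hV_def
  have hins : Finset.Icc 1 k = insert 1 (Finset.Icc 2 k) := by
    ext i
    simp only [Finset.mem_Icc, Finset.mem_insert]
    omega
  have hnotmem : (1:ℕ) ∉ Finset.Icc 2 k := by simp
  have hsplit : ∀ (g : ℕ → ℝ), ∑ i ∈ Finset.Icc 1 k, g i = g 1 + ∑ i ∈ Finset.Icc 2 k, g i := by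
    intro g
    rw [hins, Finset.sum_insert hnotmem]
  have hsplitΩ : ∀ (g : ℕ → Ω → ℝ) (ω : Ω),
      ∑ i ∈ Finset.Icc 1 k, g i ω = g 1 ω + ∑ i ∈ Finset.Icc 2 k, g i ω := by
    intro g ω
    rw [hins, Finset.sum_insert hnotmem]
  have hV : V = a + b := hsplit (fun i => d i ^ 2)
  have ha0 : 0 ≤ a := sq_nonneg _
  have hb0 : 0 ≤ b := Finset.sum_nonneg fun i _ => sq_nonneg _
  have hkR : (1:ℝ) ≤ (k:ℝ) := by exact_mod_cast hk
  have hkpos : (0:ℝ) < k := by linarith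
  have hx2 : (2:ℝ) ≤ (k:ℝ) / δ := by
    rw [le_div_iff₀ hδ0]
    nlinarith
  have hL2 : Real.log 2 ≤ L := Real.log_le_log (by norm_num) hx2
  have hL4 : (1:ℝ)/4 < L := by
    have := Real.log_two_gt_d9
    linarith
  have hLpos : 0 < L := by linarith
  have hd1 : 0 ≤ d 1 := hd 1 le_rfl
  have hqa : Real.sqrt a = d 1 := by rw [ha_def, Real.sqrt_sq hd1]
  set p : ℝ := Real.sqrt (V * L) with hp_def
  have hp0 : 0 ≤ p := Real.sqrt_nonneg _
  have hp2 : p ^ 2 = V * L := Real.sq_sqrt (by positivity)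
  set eps : ℝ := 2 * p with heps_def
  set eps' : ℝ := eps - d 1 with heps'_def
  -- (A) nonnegativity
  have hA : 0 ≤ eps' := by
    have h1 : Real.sqrt a ≤ Real.sqrt (4 * (V * L)) := by
      apply Real.sqrt_le_sqrt
      nlinarith
    have h2 : Real.sqrt (4 * (V * L)) = 2 * p := by
      rw [Real.sqrt_mul (by norm_num : (0:ℝ) ≤ 4),
        show (4:ℝ) = 2^2 by norm_num, Real.sqrt_sq (by norm_num : (0:ℝ) ≤ 2)]
    rw [heps'_def, heps_def, sub_nonneg, ← hqa]
    rw [h2] at h1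
    exact h1
  -- (B) key algebraic inequality
  have hB : (4 * L - 1) * b ≤ eps' ^ 2 := by
    have hq2 : d 1 ^ 2 = a := rfl
    have hp2' : p ^ 2 = (a + b) * L := by rw [hp2, hV]
    have hiden : L * ((2 * p - d 1) ^ 2 - (4 * L - 1) * b) = (p - 2 * L * d 1) ^ 2 := by
      linear_combination (4 * L - 1) * hp2' + (L - 4 * L ^ 2) * hq2
    have key := sq_nonneg (p - 2 * L * d 1)
    rw [heps'_def, heps_def]
    nlinarith [hiden, key, hLpos]
  -- the event bound via the second part
  set T : Ω → ℝ := fun ω => ∑ i ∈ Finset.Icc 2 k, φ i ω with hT_def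
  have hexpL : Real.exp (-(2 * L)) = (δ / k) ^ 2 := by
    have hxpos : (0:ℝ) < (k:ℝ) / δ := by positivity
    rw [hL_def]
    rw [show -(2 * Real.log ((k:ℝ)/δ)) = Real.log (((k:ℝ)/δ)^(-2 : ℤ)) by
      rw [Real.log_zpow]; push_cast; ring]
    rw [Real.exp_log (by positivity)]
    rw [zpow_neg, zpow_two]
    field_simp
  rcases eq_or_lt_of_le hb0 with hb_eq | hb_pos
  · -- b = 0 : the event is a.e. empty
    have hd0 : ∀ i ∈ Finset.Icc 2 k, d i = 0 := by
      intro i hi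
      have h := (Finset.sum_eq_zero_iff_of_nonneg (fun i _ => sq_nonneg (d i))).mp hb_eq.symm i hi
      exact pow_eq_zero_iff (by norm_num) |>.mp h
    have hnull : μ {ω | 2 * Real.sqrt (V * L) < |∑ i ∈ Finset.Icc 1 k, φ i ω|} = 0 := by
      rw [measure_eq_zero_iff_ae_notMem]
      filter_upwards [hbound 1 le_rfl, aux_ae_bound hbound 2 k (by norm_num)] with ω h1 h2
      simp only [Set.mem_setOf_eq, not_lt]
      have hT0 : ∑ i ∈ Finset.Icc 2 k, φ i ω = 0 := by
        apply Finset.sum_eq_zero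
        intro i hi
        have := (h2 i hi).trans (le_of_eq (hd0 i hi))
        exact abs_nonpos_iff.mp this
      rw [hsplitΩ φ ω, hT0, add_zero]
      calc |φ 1 ω| ≤ d 1 := h1
        _ ≤ 2 * p := by rw [heps'_def, heps_def] at hA; linarith
    exact le_trans (le_of_eq hnull) zero_le
  · -- b > 0 : Chernoff
    set t : ℝ := eps' / b with ht_def
    have ht0 : 0 ≤ t := div_nonneg hA hb_pos.le
    have hmgf_pos := aux_mgf_le hadapted hint hmds hbound k hk t
    have hmgf_neg := aux_mgf_le hadapted hint hmds hbound k hk (-t)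
    have hintpos := aux_exp_int (μ := μ) (F := F) hadapted hbound k t
    have hintneg := aux_exp_int (μ := μ) (F := F) hadapted hbound k (-t)
    have c1 : (μ {ω | eps' ≤ T ω}).toReal ≤ Real.exp (-t * eps') * mgf T μ t :=
      measure_ge_le_exp_mul_mgf eps' ht0 hintpos
    have c2 : (μ {ω | T ω ≤ -eps'}).toReal ≤ Real.exp (-(-t) * (-eps')) * mgf T μ (-t) :=
      measure_le_le_exp_mul_mgf (-eps') (neg_nonpos.mpr ht0) hintneg
    have hmgf_pos' : mgf T μ t ≤ Real.exp (t ^ 2 * b / 2) := hmgf_pos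
    have hmgf_neg' : mgf T μ (-t) ≤ Real.exp (t ^ 2 * b / 2) := by
      have : (-t) ^ 2 = t ^ 2 := by ring
      rw [← this]
      exact hmgf_neg
    -- the common bound
    have hkey : Real.exp (-t * eps') * Real.exp (t ^ 2 * b / 2) ≤
        Real.exp (1/2) * (δ / k) ^ 2 := by
      rw [← Real.exp_add]
      rw [← hexpL, ← Real.exp_add]
      apply Real.exp_le_exp.2
      have he : -t * eps' + t ^ 2 * b / 2 = -(eps' ^ 2 / (2 * b)) := by
        rw [ht_def]
        field_simp
        ring
      rw [he]
      have h2b : (2 * L - 1/2) * (2 * b) = (4 * L - 1) * b := by ring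
      have : 2 * L - 1/2 ≤ eps' ^ 2 / (2 * b) := by
        rw [le_div_iff₀ (by positivity)]
        rw [h2b]
        exact hB
      linarith
    have hc1' : (μ {ω | eps' ≤ T ω}).toReal ≤ Real.exp (1/2) * (δ / k) ^ 2 := by
      refine le_trans c1 (le_trans ?_ hkey)
      exact mul_le_mul_of_nonneg_left hmgf_pos' (Real.exp_pos _).le
    have hc2' : (μ {ω | T ω ≤ -eps'}).toReal ≤ Real.exp (1/2) * (δ / k) ^ 2 := by
      refine le_trans c2 (le_trans ?_ hkey)
      have : -(-t) * (-eps') = -t * eps' := by ring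
      rw [this]
      exact mul_le_mul_of_nonneg_left hmgf_neg' (Real.exp_pos _).le
    -- event inclusion
    have hsub : μ {ω | 2 * Real.sqrt (V * L) < |∑ i ∈ Finset.Icc 1 k, φ i ω|} ≤
        μ ({ω | eps' ≤ T ω} ∪ {ω | T ω ≤ -eps'}) := by
      apply measure_mono_ae
      filter_upwards [hbound 1 le_rfl] with ω h1
      intro hmem
      have hmem : 2 * Real.sqrt (V * L) < |∑ i ∈ Finset.Icc 1 k, φ i ω| := hmem
      have hS : ∑ i ∈ Finset.Icc 1 k, φ i ω = φ 1 ω + T ω := hsplitΩ φ ω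
      have habs : eps' < |T ω| := by
        have : |∑ i ∈ Finset.Icc 1 k, φ i ω| ≤ |φ 1 ω| + |T ω| := by
          rw [hS]; exact abs_add_le _ _
        rw [heps'_def, heps_def]
        have : 2 * p < |φ 1 ω| + |T ω| := lt_of_lt_of_le hmem this
        linarith [h1]
      rcases lt_abs.mp habs with h | h
      · exact Or.inl (Set.mem_setOf_eq ▸ h.le)
      · exact Or.inr (by simp only [Set.mem_setOf_eq]; linarith)
    refine le_trans hsub (le_trans (measure_union_le _ _) ?_)
    have hne1 : μ {ω | eps' ≤ T ω} ≠ ⊤ := measure_ne_top μ _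
    have hne2 : μ {ω | T ω ≤ -eps'} ≠ ⊤ := measure_ne_top μ _
    rw [← ENNReal.ofReal_toReal (a := μ {ω | eps' ≤ T ω}) hne1,
      ← ENNReal.ofReal_toReal (a := μ {ω | T ω ≤ -eps'}) hne2,
      ← ENNReal.ofReal_add ENNReal.toReal_nonneg ENNReal.toReal_nonneg]
    apply ENNReal.ofReal_le_ofReal
    calc (μ {ω | eps' ≤ T ω}).toReal + (μ {ω | T ω ≤ -eps'}).toReal
        ≤ Real.exp (1/2) * (δ / k) ^ 2 + Real.exp (1/2) * (δ / k) ^ 2 := add_le_add hc1' hc2'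
      _ = 2 * Real.exp (1/2) * (δ / k) ^ 2 := by ring


end AzumaAux


theorem stmt_6 {Ω : Type*} {m0 : MeasurableSpace Ω} (μ : Measure Ω) [IsProbabilityMeasure μ]
    (F : Filtration ℕ m0) (φ : ℕ → Ω → ℝ) (d : ℕ → ℝ)
    (hadapted : ∀ k, 1 ≤ k → StronglyMeasurable[F k] (φ k))
    (hint : ∀ k, 1 ≤ k → Integrable (φ k) μ)
    (hmds : ∀ k, 1 ≤ k → μ[φ (k + 1) | F k] =ᵐ[μ] 0)
    (hd : ∀ k, 1 ≤ k → 0 ≤ d k)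
    (hbound : ∀ k, 1 ≤ k → ∀ᵐ ω ∂μ, |φ k ω| ≤ d k)
    (δ : ℝ) (hδ0 : 0 < δ) (hδ1 : δ ≤ 1 / 2) :
    1 - 4 * δ ≤ (μ {ω | ∀ k : ℕ, 1 ≤ k →
        |∑ i ∈ Finset.Icc 1 k, φ i ω| ≤
          2 * Real.sqrt ((∑ i ∈ Finset.Icc 1 k, d i ^ 2) * Real.log (k / δ))}).toReal := by
  classical
  set bad : ℕ → Set Ω := fun k =>
    if 1 ≤ k then
      {ω | 2 * Real.sqrt ((∑ i ∈ Finset.Icc 1 k, d i ^ 2) * Real.log (k / δ)) <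
        |∑ i ∈ Finset.Icc 1 k, φ i ω|}
    else ∅ with hbad_def
  have hbadk : ∀ k : ℕ, 1 ≤ k → bad k =
      {ω | 2 * Real.sqrt ((∑ i ∈ Finset.Icc 1 k, d i ^ 2) * Real.log (k / δ)) <
        |∑ i ∈ Finset.Icc 1 k, φ i ω|} := by
    intro k hk
    simp only [hbad_def, if_pos hk]
  have hbad0 : ∀ k : ℕ, ¬ 1 ≤ k → bad k = ∅ := by
    intro k hk
    simp only [hbad_def, if_neg hk]
  -- measurability
  have hSmeas : ∀ k : ℕ, Measurable (fun ω => ∑ i ∈ Finset.Icc 1 k, φ i ω) := by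
    intro k
    refine Finset.measurable_sum _ fun i hi => ?_
    have hi1 : 1 ≤ i := (Finset.mem_Icc.mp hi).1
    exact ((hadapted i hi1).mono (F.le i)).measurable
  have hbadmeas : ∀ k, MeasurableSet (bad k) := by
    intro k
    by_cases hk : 1 ≤ k
    · rw [hbadk k hk]
      exact measurableSet_lt measurable_const (hSmeas k).abs
    · rw [hbad0 k hk]
      exact MeasurableSet.empty
  -- per-k bound
  have hbadle : ∀ k : ℕ, μ (bad k) ≤ ENNReal.ofReal (2 * Real.exp (1/2) * (δ / k) ^ 2) := by
    intro k
    by_cases hk : 1 ≤ k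
    · rw [hbadk k hk]
      exact aux_tail hadapted hint hmds hd hbound hδ0 hδ1 k hk
    · rw [hbad0 k hk]
      simp
  -- summability and sum value
  have hre : ∀ k : ℕ, 2 * Real.exp (1/2) * (δ / (k:ℝ)) ^ 2 =
      (2 * Real.exp (1/2) * δ ^ 2) * ((1:ℝ) / (k:ℝ) ^ 2) := by
    intro k
    ring
  have hsumm : Summable (fun k : ℕ => 2 * Real.exp (1/2) * (δ / (k:ℝ)) ^ 2) := by
    refine (hasSum_zeta_two.summable.mul_left (2 * Real.exp (1/2) * δ ^ 2)).congr fun k => ?_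
    rw [hre k]
  have htsum : ∑' k : ℕ, 2 * Real.exp (1/2) * (δ / (k:ℝ)) ^ 2 =
      (2 * Real.exp (1/2) * δ ^ 2) * (Real.pi ^ 2 / 6) := by
    rw [show (fun k : ℕ => 2 * Real.exp (1/2) * (δ / (k:ℝ)) ^ 2) =
        fun k : ℕ => (2 * Real.exp (1/2) * δ ^ 2) * ((1:ℝ) / (k:ℝ) ^ 2) from funext hre]
    exact (hasSum_zeta_two.mul_left _).tsum_eq
  -- numerics
  have hexphalf : Real.exp (1/2) ≤ 1.6488 := by
    have hsq : Real.exp (1/2) * Real.exp (1/2) = Real.exp 1 := by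
      rw [← Real.exp_add]; norm_num
    nlinarith [Real.exp_one_lt_d9, Real.exp_pos (1/2 : ℝ)]
  have hpisq : Real.pi ^ 2 ≤ 10 := by
    nlinarith [Real.pi_lt_d2, Real.pi_pos]
  have hnum : (2 * Real.exp (1/2) * δ ^ 2) * (Real.pi ^ 2 / 6) ≤ 4 * δ := by
    have hE := Real.exp_pos (1/2 : ℝ)
    nlinarith [sq_nonneg δ, mul_nonneg (sq_nonneg δ) hE.le, mul_pos hδ0 hδ0]
  -- union bound
  have hunion : μ (⋃ k, bad k) ≤ ENNReal.ofReal (4 * δ) := by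
    calc μ (⋃ k, bad k) ≤ ∑' k, μ (bad k) := measure_iUnion_le _
      _ ≤ ∑' k : ℕ, ENNReal.ofReal (2 * Real.exp (1/2) * (δ / (k:ℝ)) ^ 2) :=
          ENNReal.tsum_le_tsum hbadle
      _ = ENNReal.ofReal (∑' k : ℕ, 2 * Real.exp (1/2) * (δ / (k:ℝ)) ^ 2) :=
          (ENNReal.ofReal_tsum_of_nonneg (fun k => by positivity) hsumm).symm
      _ ≤ ENNReal.ofReal (4 * δ) := by
          apply ENNReal.ofReal_le_ofReal
          rw [htsum]
          exact hnum
  -- the good set is the complement of the union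
  have hset : {ω | ∀ k : ℕ, 1 ≤ k →
      |∑ i ∈ Finset.Icc 1 k, φ i ω| ≤
        2 * Real.sqrt ((∑ i ∈ Finset.Icc 1 k, d i ^ 2) * Real.log (k / δ))} =
      (⋃ k, bad k)ᶜ := by
    ext ω
    simp only [Set.mem_compl_iff, Set.mem_iUnion, Set.mem_setOf_eq, not_exists]
    constructor
    · intro h k
      by_cases hk : 1 ≤ k
      · rw [hbadk k hk]
        simp only [Set.mem_setOf_eq, not_lt]
        exact h k hk
      · rw [hbad0 k hk]
        simp
    · intro h k hk
      have hωk := h k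
      rw [hbadk k hk] at hωk
      simp only [Set.mem_setOf_eq, not_lt] at hωk
      exact hωk
  rw [hset, measure_compl (MeasurableSet.iUnion hbadmeas) (measure_ne_top μ _), measure_univ]
  have hle1 : μ (⋃ k, bad k) ≤ 1 := prob_le_one
  rw [ENNReal.toReal_sub_of_le hle1 (by norm_num), ENNReal.toReal_one]
  have hfin : (μ (⋃ k, bad k)).toReal ≤ 4 * δ := by
    have h := ENNReal.toReal_mono ENNReal.ofReal_ne_top hunion
    rwa [ENNReal.toReal_ofReal (by linarith)] at h
  linarith
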